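/- Let P be a path graph on m vertices with m ≥ α, and let α ≥ 1 and β ≥ 2α + 1 be integers. Then there exists an (α, β)-independent set of P: a set I of vertices of P such that (i) I is an independent set containing neither endpoint of P, and (ii) every connected component of P minus I has between α and β vertices. -/
import Mathlib

namespace Stmt4Aux

def Iset (m α : ℕ) : Set (Fin m) :=
  {v | ((v : ℕ) + 1) % (α + 1) = 0 ∧ (v : ℕ) + 1 + α ≤ m}

def t (m α : ℕ) : ℕ := (m - α) / (α + 1)

def b (m α : ℕ) (x : ℕ) : ℕ := min (x / (α + 1)) (t m α)

lemma div_helper {k j r : ℕ} (hk : 0 < k) (hr : r < k) : (j * k + r) / k = j := by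
  rw [mul_comm, Nat.mul_add_div hk, Nat.div_eq_of_lt hr, Nat.add_zero]

lemma mod_helper {k j r : ℕ} (hr : r < k) : (j * k + r) % k = r := by
  rw [mul_comm j k, Nat.mul_add_mod, Nat.mod_eq_of_lt hr]

variable {m α : ℕ}

lemma adj_b (hα : 1 ≤ α) (hm : α ≤ m) {u v : Fin m}
    (hu : u ∉ Iset m α) (h : (u : ℕ) + 1 = (v : ℕ)) : b m α u = b m α v := by
  by_cases hmod : ((u : ℕ) + 1) % (α + 1) = 0
  · have hnot : ¬ ((u : ℕ) + 1 + α ≤ m) := fun hc => hu ⟨hmod, hc⟩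
    obtain ⟨j, hxj⟩ : ∃ j, (u : ℕ) + 1 = (j + 1) * (α + 1) := by
      have hd : (α + 1) * (((u : ℕ) + 1) / (α + 1)) = (u : ℕ) + 1 :=
        Nat.mul_div_cancel' (Nat.dvd_of_mod_eq_zero hmod)
      refine ⟨((u : ℕ) + 1) / (α + 1) - 1, ?_⟩
      have hpos : ((u : ℕ) + 1) / (α + 1) ≠ 0 := by
        intro h0
        rw [h0, Nat.mul_zero] at hd
        omega
      have e : (((u : ℕ) + 1) / (α + 1) - 1 + 1) * (α + 1)
          = (α + 1) * (((u : ℕ) + 1) / (α + 1)) := by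
        rw [mul_comm]
        congr 1
        generalize hq : ((u : ℕ) + 1) / (α + 1) = q at hpos
        omega
      rw [e, hd]
    have e1 : (j + 1) * (α + 1) = j * (α + 1) + (α + 1) := by ring
    have hdiv : (u : ℕ) / (α + 1) = j := by
      have hx : (u : ℕ) = j * (α + 1) + α := by omega
      rw [hx, div_helper (by omega) (by omega)]
    have hvdiv : (v : ℕ) / (α + 1) = j + 1 := by
      have hx : (v : ℕ) = (j + 1) * (α + 1) + 0 := by omega
      rw [hx, div_helper (by omega) (by omega)]
    have htj : t m α < j + 1 := by
      rw [t, Nat.div_lt_iff_lt_mul (by omega : 0 < α + 1)]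
      omega
    simp only [b, hdiv, hvdiv]
    omega
  · have hstep : ((u : ℕ) + 1) / (α + 1) = (u : ℕ) / (α + 1) := by
      rw [Nat.succ_div, if_neg, Nat.add_zero]
      intro hd
      exact hmod (Nat.mod_eq_zero_of_dvd hd)
    simp only [b, ← h, hstep]

lemma b_le_t (x : ℕ) : b m α x ≤ t m α := min_le_right _ _

lemma reach_b (hα : 1 ≤ α) (hm : α ≤ m) {u v : ↥(Iset m α)ᶜ}
    (h : ((SimpleGraph.pathGraph m).induce (Iset m α)ᶜ).Reachable u v) :
    b m α (u : Fin m) = b m α (v : Fin m) := by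
  obtain ⟨p⟩ := h
  induction p with
  | nil => rfl
  | cons hadj p ih =>
    rename_i a c d
    refine Eq.trans ?_ ih
    have hadj' : (SimpleGraph.pathGraph m).Adj (a : Fin m) (c : Fin m) := hadj
    rcases SimpleGraph.pathGraph_adj.mp hadj' with h1 | h1
    · exact adj_b hα hm a.2 h1
    · exact (adj_b hα hm c.2 h1).symm

lemma reach_of_b_aux (hα : 1 ≤ α) (hm : α ≤ m) :
    ∀ n (u v : ↥(Iset m α)ᶜ), (v : Fin m).val = (u : Fin m).val + n →
      b m α (u : Fin m) = b m α (v : Fin m) →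
      ((SimpleGraph.pathGraph m).induce (Iset m α)ᶜ).Reachable u v := by
  intro n
  induction n with
  | zero =>
    intro u v h _
    have : u = v := by apply Subtype.ext; apply Fin.ext; omega
    rw [this]
  | succ n ih =>
    intro u v h hb
    have hv1 : 1 ≤ (v : Fin m).val := by omega
    have hvm : (v : Fin m).val - 1 < m := lt_trans (by omega) (v : Fin m).isLt
    have hv'mem : (⟨(v : Fin m).val - 1, hvm⟩ : Fin m) ∈ (Iset m α)ᶜ := by
      intro hmem
      obtain ⟨h1, h2⟩ := hmem
      simp only [Fin.val_mk] at h1 h2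
      have hval : (v : Fin m).val - 1 + 1 = (v : Fin m).val := by omega
      rw [hval] at h1 h2
      obtain ⟨j, hvj⟩ : ∃ j, (v : Fin m).val = (α + 1) * j :=
        Nat.dvd_of_mod_eq_zero h1
      have hcomm : (α + 1) * j = j * (α + 1) := Nat.mul_comm _ _
      have hj1 : 1 ≤ j := by
        by_contra h0
        have : j = 0 := by omega
        rw [this] at hvj
        omega
      have hjt : j ≤ t m α := by
        rw [t, Nat.le_div_iff_mul_le (by omega : 0 < α + 1)]
        omega
      have hvd : (v : Fin m).val / (α + 1) = j := by
        rw [hvj, Nat.mul_div_cancel_left _ (by omega : 0 < α + 1)]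
      have hune : (u : Fin m).val ≠ (α + 1) * j - 1 := by
        intro he
        apply u.2
        constructor
        · have e : (u : Fin m).val + 1 = (α + 1) * j := by omega
          rw [e]; exact Nat.mul_mod_right _ _
        · omega
      have hudiv : (u : Fin m).val / (α + 1) < j := by
        rw [Nat.div_lt_iff_lt_mul (by omega : 0 < α + 1)]
        omega
      simp only [b, hvd] at hb
      omega
    have hadjval : ((⟨(v : Fin m).val - 1, hvm⟩ : Fin m) : ℕ) + 1 = (v : Fin m).val := by
      simp; omega
    have hbv' : b m α (⟨(v : Fin m).val - 1, hvm⟩ : Fin m) = b m α (v : Fin m) :=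
      adj_b hα hm hv'mem hadjval
    have hreach1 : ((SimpleGraph.pathGraph m).induce (Iset m α)ᶜ).Reachable u
        ⟨⟨(v : Fin m).val - 1, hvm⟩, hv'mem⟩ := by
      apply ih
      · simp; omega
      · rw [hb, ← hbv']
    refine hreach1.trans ?_
    apply SimpleGraph.Adj.reachable
    show (SimpleGraph.pathGraph m).Adj _ (v : Fin m)
    exact SimpleGraph.pathGraph_adj.mpr (Or.inl hadjval)

lemma reach_of_b (hα : 1 ≤ α) (hm : α ≤ m) {u v : ↥(Iset m α)ᶜ}
    (hb : b m α (u : Fin m) = b m α (v : Fin m)) :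
    ((SimpleGraph.pathGraph m).induce (Iset m α)ᶜ).Reachable u v := by
  rcases le_total (u : Fin m).val (v : Fin m).val with hle | hle
  · exact reach_of_b_aux hα hm ((v : Fin m).val - (u : Fin m).val) u v (by omega) hb
  · exact (reach_of_b_aux hα hm ((u : Fin m).val - (v : Fin m).val) v u (by omega) hb.symm).symm

lemma supp_eq (hα : 1 ≤ α) (hm : α ≤ m)
    (c : ((SimpleGraph.pathGraph m).induce (Iset m α)ᶜ).ConnectedComponent) :
    ∃ j : ℕ, j ≤ t m α ∧ (∃ u : ↥(Iset m α)ᶜ, b m α (u : Fin m) = j) ∧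
      c.supp = {u : ↥(Iset m α)ᶜ | b m α (u : Fin m) = j} := by
  obtain ⟨v, rfl⟩ := c.exists_rep
  refine ⟨b m α (v : Fin m), b_le_t _, ⟨v, rfl⟩, ?_⟩
  ext u
  simp only [SimpleGraph.ConnectedComponent.mem_supp_iff, Set.mem_setOf_eq]
  constructor
  · intro hmk
    exact reach_b hα hm (SimpleGraph.ConnectedComponent.eq.mp hmk)
  · intro hbu
    exact SimpleGraph.ConnectedComponent.eq.mpr (reach_of_b hα hm hbu)

/-- Image of a block under the coercion to `ℕ`. -/
lemma image_block (hα : 1 ≤ α) (hm : α ≤ m) (j : ℕ) :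
    (fun u : ↥(Iset m α)ᶜ => ((u : Fin m) : ℕ)) '' {u : ↥(Iset m α)ᶜ | b m α (u : Fin m) = j}
      = {x : ℕ | ∃ hx : x < m, (⟨x, hx⟩ : Fin m) ∉ Iset m α ∧ b m α x = j} := by
  ext x
  simp only [Set.mem_image, Set.mem_setOf_eq]
  constructor
  · rintro ⟨u, hbu, rfl⟩
    exact ⟨(u : Fin m).isLt, u.2, hbu⟩
  · rintro ⟨hx, hni, hb⟩
    exact ⟨⟨⟨x, hx⟩, hni⟩, hb, rfl⟩

lemma tk_le (hm : α ≤ m) : t m α * (α + 1) + α ≤ m := by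
  have h1 : t m α * (α + 1) ≤ m - α := by
    rw [t]; exact Nat.div_mul_le_self _ _
  omega

lemma lt_tk_succ : m - α < (t m α + 1) * (α + 1) := by
  have hd := Nat.div_add_mod (m - α) (α + 1)
  have hmod : (m - α) % (α + 1) < α + 1 := Nat.mod_lt _ (by omega)
  have e : (t m α + 1) * (α + 1) = (α + 1) * ((m - α) / (α + 1)) + (α + 1) := by
    rw [t]; ring
  omega

lemma block_lt (hα : 1 ≤ α) (hm : α ≤ m) {j : ℕ} (hj : j < t m α) :
    {x : ℕ | ∃ hx : x < m, (⟨x, hx⟩ : Fin m) ∉ Iset m α ∧ b m α x = j}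
      = Set.Ico (j * (α + 1)) (j * (α + 1) + α) := by
  have htk := tk_le (m := m) (α := α) hm
  have hjt : (j + 1) * (α + 1) ≤ t m α * (α + 1) := Nat.mul_le_mul_right _ hj
  have e1 : (j + 1) * (α + 1) = j * (α + 1) + (α + 1) := by ring
  ext x
  simp only [Set.mem_setOf_eq, Set.mem_Ico]
  constructor
  · rintro ⟨hx, hni, hb⟩
    have hxd : x / (α + 1) = j := by
      have := b_le_t (m := m) (α := α) x
      simp only [b] at hb
      omega
    have hlow : j * (α + 1) ≤ x := by
      have := Nat.div_mul_le_self x (α + 1)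
      rw [hxd] at this
      exact this
    have hhigh : x < (j + 1) * (α + 1) := by
      have hd := Nat.div_add_mod x (α + 1)
      have hmod2 : x % (α + 1) < α + 1 := Nat.mod_lt _ (by omega)
      rw [hxd] at hd
      have hcm : (α + 1) * j = j * (α + 1) := Nat.mul_comm _ _
      omega
    have hne : x ≠ j * (α + 1) + α := by
      intro he
      apply hni
      constructor
      · simp only [he]
        have : j * (α + 1) + α + 1 = (j + 1) * (α + 1) := by ring
        rw [this, Nat.mul_mod_left]
      · simp only [he]
        omega
    omega
  · rintro ⟨h1, h2⟩
    have hxm : x < m := by omega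
    have hxd : x / (α + 1) = j := by
      have : x = j * (α + 1) + (x - j * (α + 1)) := by omega
      rw [this, div_helper (by omega) (by omega)]
    refine ⟨hxm, ?_, ?_⟩
    · intro hmem
      obtain ⟨hm1', _⟩ := hmem
      have hm1 : (x + 1) % (α + 1) = 0 := hm1'
      have : x + 1 = j * (α + 1) + (x + 1 - j * (α + 1)) := by omega
      rw [this, mod_helper (by omega)] at hm1
      omega
    · simp only [b, hxd]
      omega

lemma block_t (hα : 1 ≤ α) (hm : α ≤ m) :
    {x : ℕ | ∃ hx : x < m, (⟨x, hx⟩ : Fin m) ∉ Iset m α ∧ b m α x = t m α}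
      = Set.Ico (t m α * (α + 1)) m := by
  have htk := tk_le (m := m) (α := α) hm
  ext x
  simp only [Set.mem_setOf_eq, Set.mem_Ico]
  constructor
  · rintro ⟨hx, hni, hb⟩
    refine ⟨?_, hx⟩
    have hxd : t m α ≤ x / (α + 1) := by
      simp only [b] at hb
      omega
    calc t m α * (α + 1) ≤ x / (α + 1) * (α + 1) := Nat.mul_le_mul_right _ hxd
      _ ≤ x := Nat.div_mul_le_self _ _
  · rintro ⟨h1, h2⟩
    refine ⟨h2, ?_, ?_⟩
    · intro hmem
      obtain ⟨hm1', hm2'⟩ := hmem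
      have hm1 : (x + 1) % (α + 1) = 0 := hm1'
      have hm2 : x + 1 + α ≤ m := hm2'
      obtain ⟨q, hq⟩ : ∃ q, x + 1 = (α + 1) * q := Nat.dvd_of_mod_eq_zero hm1
      have hqt : q ≤ t m α := by
        rw [t, Nat.le_div_iff_mul_le (by omega : 0 < α + 1)]
        have : q * (α + 1) = (α + 1) * q := Nat.mul_comm _ _
        omega
      have : q * (α + 1) ≤ t m α * (α + 1) := Nat.mul_le_mul_right _ hqt
      have hcm : q * (α + 1) = (α + 1) * q := Nat.mul_comm _ _
      omega
    · have hxd : t m α ≤ x / (α + 1) := by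
        rw [Nat.le_div_iff_mul_le (by omega : 0 < α + 1)]
        exact h1
      simp only [b]
      omega

lemma ico_ncard (a c : ℕ) : (Set.Ico a c).ncard = c - a := by
  rw [← Finset.coe_Ico, Set.ncard_coe_finset, Nat.card_Ico]

end Stmt4Aux

/-- Every path on `m ≥ α` vertices admits an `(α, β)`-independent set when
`α ≥ 1` and `β ≥ 2α + 1`: an independent set avoiding both endpoints such that
every component of the path minus the set has between `α` and `β` vertices. -/
theorem stmt_4 (m α β : ℕ) (hα : 1 ≤ α) (hβ : 2 * α + 1 ≤ β) (hm : α ≤ m) :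
    ∃ I : Set (Fin m),
      (∀ u ∈ I, ∀ v ∈ I, ¬ (SimpleGraph.pathGraph m).Adj u v) ∧
      (∀ v ∈ I, (v : ℕ) ≠ 0 ∧ (v : ℕ) ≠ m - 1) ∧
      (∀ c : ((SimpleGraph.pathGraph m).induce Iᶜ).ConnectedComponent,
        α ≤ c.supp.ncard ∧ c.supp.ncard ≤ β) := by
  refine ⟨Stmt4Aux.Iset m α, ?_, ?_, ?_⟩
  · rintro u ⟨hu1, hu2⟩ v ⟨hv1, hv2⟩ hadj
    have key : ∀ a c : Fin m, ((a : ℕ) + 1) % (α + 1) = 0 →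
        ((c : ℕ) + 1) % (α + 1) = 0 → (a : ℕ) + 1 = (c : ℕ) → False := by
      intro a c ha hc h
      have d1 := Nat.dvd_of_mod_eq_zero ha
      have d2 := Nat.dvd_of_mod_eq_zero hc
      rw [← h] at d2
      have d3 := Nat.dvd_sub d2 d1
      have e : (a : ℕ) + 1 + 1 - ((a : ℕ) + 1) = 1 := by omega
      rw [e] at d3
      have := Nat.le_of_dvd one_pos d3
      omega
    rcases SimpleGraph.pathGraph_adj.mp hadj with h | h
    · exact key u v hu1 hv1 h
    · exact key v u hv1 hu1 h
  · rintro v ⟨hv1, hv2⟩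
    constructor
    · intro h0
      rw [h0] at hv1
      have := Nat.le_of_dvd one_pos (Nat.dvd_of_mod_eq_zero hv1)
      omega
    · intro h0
      omega
  · intro c
    obtain ⟨j, hjt, -, hsupp⟩ := Stmt4Aux.supp_eq hα hm c
    have hinj : Function.Injective
        (fun u : ↥(Stmt4Aux.Iset m α)ᶜ => ((u : Fin m) : ℕ)) := by
      intro a c hac
      exact Subtype.ext (Fin.ext hac)
    have hcard : c.supp.ncard
        = ((fun u : ↥(Stmt4Aux.Iset m α)ᶜ => ((u : Fin m) : ℕ)) '' c.supp).ncard :=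
      (Set.ncard_image_of_injective _ hinj).symm
    rw [hsupp, Stmt4Aux.image_block hα hm j] at hcard
    rw [hsupp]
    rcases lt_or_eq_of_le hjt with hlt | heq
    · rw [Stmt4Aux.block_lt hα hm hlt, Stmt4Aux.ico_ncard,
        Nat.add_sub_cancel_left] at hcard
      constructor <;> omega
    · subst heq
      rw [Stmt4Aux.block_t hα hm, Stmt4Aux.ico_ncard] at hcard
      have h1 := Stmt4Aux.tk_le (m := m) (α := α) hm
      have h2 := Stmt4Aux.lt_tk_succ (m := m) (α := α)
      have e : (Stmt4Aux.t m α + 1) * (α + 1)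
          = Stmt4Aux.t m α * (α + 1) + (α + 1) := by ring
      have hle : Stmt4Aux.t m α * (α + 1) ≤ m := by omega
      have hsum : {u : ↥(Stmt4Aux.Iset m α)ᶜ |
          Stmt4Aux.b m α (u : Fin m) = Stmt4Aux.t m α}.ncard
            + Stmt4Aux.t m α * (α + 1) = m := by
        rw [hcard]
        exact Nat.sub_add_cancel hle
      constructor <;> omega
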